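/- Let K : ℝ_+ → ℝ_+ be a nonnegative kernel satisfying 0 ≤ K(t) ≤ C e^{bt} t^{a-1} for some constants a, b, C > 0. Then for every n ≥ 1, the n-fold convolution power K^{*n} satisfies (𝟏 * K^{*n})(t) ≤ C^n e^{bt} Γ(a)^n t^{an} / Γ(an+1), where 𝟏 is the constant function 1 and (f*g)(t) = ∫_0^t f(t-s)g(s)ds. -/

import Mathlib

open MeasureTheory Set Real

/-- The `n`-fold convolution power of a kernel `K`:
`K^{*1} = K`, `K^{*(k+1)}(t) = ∫_0^t K(t-s) K^{*k}(s) ds`. -/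
noncomputable def convPow (K : ℝ → ℝ) : ℕ → ℝ → ℝ
  | 0 => K
  | n + 1 => fun t => ∫ s in Ioc (0 : ℝ) t, K (t - s) * convPow K n s


lemma myBetaIntegrableOn {p q t : ℝ} (hp : 0 < p) (hq : 0 < q) (ht : 0 < t) :
    IntegrableOn (fun s => s ^ (p - 1) * (t - s) ^ (q - 1)) (Ioc 0 t) := by
  have h2 : (0 : ℝ) < t / 2 := by linarith
  have hsplit : Ioc (0:ℝ) (t/2) ∪ Ioc (t/2) t = Ioc 0 t :=
    Ioc_union_Ioc_eq_Ioc h2.le (by linarith)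
  rw [← hsplit, integrableOn_union]
  have hmes1 : AEStronglyMeasurable (fun s : ℝ => (t - s) ^ (q - 1))
      (volume.restrict (Ioc (0:ℝ) (t/2))) :=
    ((by fun_prop : Measurable fun s : ℝ => (t - s) ^ (q-1))).aestronglyMeasurable
  have hmes2 : AEStronglyMeasurable (fun s : ℝ => s ^ (p - 1))
      (volume.restrict (Ioc (t/2) t)) :=
    ((by fun_prop : Measurable fun s : ℝ => s ^ (p-1))).aestronglyMeasurable
  constructor
  · -- s^(p-1) integrable, (t-s)^(q-1) bounded
    have hg : IntegrableOn (fun s : ℝ => s ^ (p - 1)) (Ioc 0 (t/2)) := by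
      have := intervalIntegral.intervalIntegrable_rpow' (a := 0) (b := t/2)
        (show (-1:ℝ) < p - 1 by linarith)
      rwa [intervalIntegrable_iff, uIoc_of_le h2.le] at this
    have hb : ∀ᵐ s ∂(volume.restrict (Ioc (0:ℝ) (t/2))),
        ‖(t - s) ^ (q - 1)‖ ≤ (t/2) ^ (q - 1) + t ^ (q - 1) := by
      rw [ae_restrict_iff' measurableSet_Ioc]
      filter_upwards with s hs
      have h1 : t / 2 ≤ t - s := by linarith [hs.2]
      have h0 : (0:ℝ) < t - s := by linarith [hs.1]
      rw [Real.norm_of_nonneg (rpow_nonneg h0.le _)]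
      rcases le_or_gt (q - 1) 0 with hq1 | hq1
      · have := Real.rpow_le_rpow_of_nonpos h2 h1 hq1
        have h3 : (0:ℝ) ≤ t ^ (q-1) := rpow_nonneg ht.le _
        linarith
      · have := Real.rpow_le_rpow h0.le (by linarith [hs.1] : t - s ≤ t) hq1.le
        have h3 : (0:ℝ) ≤ (t/2) ^ (q-1) := rpow_nonneg h2.le _
        linarith
    have := Integrable.bdd_mul hg hmes1 hb
    exact this.congr (Filter.Eventually.of_forall fun s => mul_comm _ _)
  · -- (t-s)^(q-1) integrable, s^(p-1) bounded
    have hg : IntegrableOn (fun s : ℝ => (t - s) ^ (q - 1)) (Ioc (t/2) t) := by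
      have h0 := intervalIntegral.intervalIntegrable_rpow' (a := 0) (b := t/2)
        (show (-1:ℝ) < q - 1 by linarith)
      have h1 : IntervalIntegrable (fun x => (t - x) ^ (q - 1)) volume (t/2) t := by
        have h2' := (h0.comp_sub_left t).symm
        have e1 : t - t/2 = t/2 := by ring
        have e2 : t - 0 = t := by ring
        rwa [e1, e2] at h2'
      rwa [intervalIntegrable_iff, uIoc_of_le (by linarith : t/2 ≤ t)] at h1
    have hb : ∀ᵐ s ∂(volume.restrict (Ioc (t/2) t)),
        ‖s ^ (p - 1)‖ ≤ (t/2) ^ (p - 1) + t ^ (p - 1) := by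
      rw [ae_restrict_iff' measurableSet_Ioc]
      filter_upwards with s hs
      have h0 : (0:ℝ) < s := lt_trans h2 hs.1
      rw [Real.norm_of_nonneg (rpow_nonneg h0.le _)]
      rcases le_or_gt (p - 1) 0 with hp1 | hp1
      · have := Real.rpow_le_rpow_of_nonpos h2 hs.1.le hp1
        have h3 : (0:ℝ) ≤ t ^ (p-1) := rpow_nonneg ht.le _
        linarith
      · have := Real.rpow_le_rpow h0.le hs.2 hp1.le
        have h3 : (0:ℝ) ≤ (t/2) ^ (p-1) := rpow_nonneg h2.le _
        linarith
    exact Integrable.bdd_mul hg hmes2 hb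

lemma myBetaEval {p q t : ℝ} (hp : 0 < p) (hq : 0 < q) (ht : 0 < t) :
    ∫ s in Ioc (0:ℝ) t, s ^ (p - 1) * (t - s) ^ (q - 1) =
      Gamma p * Gamma q / Gamma (p + q) * t ^ (p + q - 1) := by
  have hpq : 0 < p + q := by linarith
  have hΓ : (0:ℝ) < Gamma (p + q) := Real.Gamma_pos_of_pos hpq
  have hs := Complex.betaIntegral_scaled (p : ℂ) (q : ℂ) ht
  have hmul := Complex.Gamma_mul_Gamma_eq_betaIntegral
    (s := (p:ℂ)) (t := (q:ℂ)) (by simpa using hp) (by simpa using hq)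
  have hΓc : Complex.Gamma ((p:ℂ) + q) ≠ 0 := by
    rw [show ((p:ℂ) + q) = ((p + q : ℝ) : ℂ) by push_cast; ring, Complex.Gamma_ofReal]
    exact_mod_cast hΓ.ne'
  have hbeta : Complex.betaIntegral p q =
      Complex.Gamma p * Complex.Gamma q / Complex.Gamma ((p:ℂ) + q) := by
    rw [eq_div_iff hΓc]
    linear_combination -hmul
  have hre : (∫ x in (0:ℝ)..t, (x : ℂ) ^ ((p:ℂ) - 1) * ((t : ℂ) - x) ^ ((q:ℂ) - 1)) =
      ((∫ x in (0:ℝ)..t, x ^ (p - 1) * (t - x) ^ (q - 1) : ℝ) : ℂ) := by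
    rw [← intervalIntegral.integral_ofReal]
    refine intervalIntegral.integral_congr fun x hx => ?_
    rw [uIcc_of_le ht.le] at hx
    have e1 : ((x ^ (p-1) : ℝ) : ℂ) = (x:ℂ) ^ ((p:ℂ) - 1) := by
      rw [Complex.ofReal_cpow hx.1]; norm_cast
    have e2 : (((t - x) ^ (q-1) : ℝ) : ℂ) = ((t:ℂ) - x) ^ ((q:ℂ) - 1) := by
      rw [Complex.ofReal_cpow (by linarith [hx.2] : (0:ℝ) ≤ t - x)]; norm_cast
    push_cast
    rw [← e1, ← e2]
  have ht' : ((t:ℂ)) ^ ((p:ℂ) + q - 1) = ((t ^ (p + q - 1) : ℝ) : ℂ) := by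
    rw [Complex.ofReal_cpow ht.le]; norm_cast
  rw [hre, hbeta, ht'] at hs
  have hG1 : Complex.Gamma (p:ℂ) = ((Gamma p : ℝ) : ℂ) := Complex.Gamma_ofReal p
  have hG2 : Complex.Gamma (q:ℂ) = ((Gamma q : ℝ) : ℂ) := Complex.Gamma_ofReal q
  have hG3 : Complex.Gamma ((p:ℂ) + q) = ((Gamma (p+q) : ℝ) : ℂ) := by
    rw [show ((p:ℂ) + q) = ((p + q : ℝ) : ℂ) by push_cast; ring]; exact Complex.Gamma_ofReal _
  rw [hG1, hG2, hG3] at hs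
  have hreal : (∫ x in (0:ℝ)..t, x ^ (p - 1) * (t - x) ^ (q - 1)) =
      t ^ (p + q - 1) * (Gamma p * Gamma q / Gamma (p + q)) := by exact_mod_cast hs
  calc ∫ s in Ioc (0:ℝ) t, s ^ (p - 1) * (t - s) ^ (q - 1)
      = ∫ x in (0:ℝ)..t, x ^ (p - 1) * (t - x) ^ (q - 1) :=
        (intervalIntegral.integral_of_le ht.le).symm
    _ = t ^ (p + q - 1) * (Gamma p * Gamma q / Gamma (p + q)) := hreal
    _ = Gamma p * Gamma q / Gamma (p + q) * t ^ (p + q - 1) := by ring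


lemma convPow_nonneg (K : ℝ → ℝ) (hK0 : ∀ t, 0 ≤ t → 0 ≤ K t) :
    ∀ n : ℕ, ∀ t : ℝ, 0 ≤ t → 0 ≤ convPow K n t := by
  intro n
  induction n with
  | zero => exact hK0
  | succ m ih =>
    intro t ht
    show 0 ≤ ∫ s in Ioc (0 : ℝ) t, K (t - s) * convPow K m s
    refine setIntegral_nonneg measurableSet_Ioc fun s hs => ?_
    exact mul_nonneg (hK0 _ (by linarith [hs.2])) (ih s hs.1.le)

lemma convPow_ptwise_bound
    (K : ℝ → ℝ) (a b C : ℝ) (ha : 0 < a) (hb : 0 < b) (hC : 0 < C)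
    (hK0 : ∀ t, 0 ≤ t → 0 ≤ K t)
    (hKbound : ∀ t, 0 < t → K t ≤ C * exp (b * t) * t ^ (a - 1)) :
    ∀ n : ℕ, ∀ t : ℝ, 0 < t →
      convPow K n t ≤ C ^ (n + 1) * exp (b * t) * Gamma a ^ (n + 1) *
        t ^ (a * ((n : ℝ) + 1) - 1) / Gamma (a * ((n : ℝ) + 1)) := by
  have hΓa : (0:ℝ) < Gamma a := Real.Gamma_pos_of_pos ha
  intro n
  induction n with
  | zero =>
    intro t ht
    have := hKbound t ht
    simp only [Nat.cast_zero, zero_add, mul_one, pow_one]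
    calc convPow K 0 t = K t := rfl
      _ ≤ C * exp (b * t) * t ^ (a - 1) := this
      _ = C * exp (b * t) * Gamma a * t ^ (a - 1) / Gamma a := by
          field_simp
  | succ m ih =>
    intro t ht
    set c : ℝ := a * ((m : ℝ) + 1) with hc
    have hcpos : 0 < c := by positivity
    have hΓc : (0:ℝ) < Gamma c := Real.Gamma_pos_of_pos hcpos
    have hΓca : (0:ℝ) < Gamma (c + a) := Real.Gamma_pos_of_pos (by linarith)
    set CC : ℝ := C ^ (m + 2) * Gamma a ^ (m + 1) / Gamma c * exp (b * t) with hCC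
    have hCCpos : 0 ≤ CC := by positivity
    have hbetaInt : IntegrableOn (fun s => s ^ (c - 1) * (t - s) ^ (a - 1)) (Ioc 0 t) :=
      myBetaIntegrableOn hcpos ha ht
    have hdom : ∀ s ∈ Ioo (0:ℝ) t,
        K (t - s) * convPow K m s ≤ CC * (s ^ (c - 1) * (t - s) ^ (a - 1)) := by
      intro s hs
      have hts : 0 < t - s := by linarith [hs.2]
      have h1 : K (t - s) ≤ C * exp (b * (t - s)) * (t - s) ^ (a - 1) := hKbound _ hts
      have h2 := ih s hs.1
      have hKnn := hK0 (t - s) hts.le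
      have hrpow : (0:ℝ) ≤ s ^ (c - 1) := rpow_nonneg hs.1.le _
      have hnn := convPow_nonneg K hK0 m s hs.1.le
      calc K (t - s) * convPow K m s
          ≤ (C * exp (b * (t - s)) * (t - s) ^ (a - 1)) *
            (C ^ (m + 1) * exp (b * s) * Gamma a ^ (m + 1) *
              s ^ (c - 1) / Gamma c) := by
            apply mul_le_mul h1 h2 hnn
            have h3 : (0:ℝ) ≤ (t - s) ^ (a - 1) := rpow_nonneg hts.le _
            positivity
        _ = CC * (s ^ (c - 1) * (t - s) ^ (a - 1)) := by
            rw [hCC, hc]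
            have he : exp (b * (t - s)) * exp (b * s) = exp (b * t) := by
              rw [← Real.exp_add]; ring_nf
            field_simp
            linear_combination (C ^ (m + 1) * C *
              s ^ (a * ((m : ℝ) + 1) - 1)) * he
    have hnn' : ∀ᵐ s ∂(volume.restrict (Ioo (0:ℝ) t)), 0 ≤ K (t - s) * convPow K m s := by
      rw [ae_restrict_iff' measurableSet_Ioo]
      filter_upwards with s hs
      exact mul_nonneg (hK0 _ (by linarith [hs.2])) (convPow_nonneg K hK0 m s hs.1.le)
    have hdom' : (fun s => K (t - s) * convPow K m s) ≤ᵐ[volume.restrict (Ioo (0:ℝ) t)]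
        fun s => CC * (s ^ (c - 1) * (t - s) ^ (a - 1)) :=
      (ae_restrict_iff' measurableSet_Ioo).mpr (Filter.Eventually.of_forall hdom)
    have hgint : IntegrableOn (fun s => CC * (s ^ (c - 1) * (t - s) ^ (a - 1))) (Ioo 0 t) :=
      (hbetaInt.mono_set Ioo_subset_Ioc_self).const_mul CC
    calc convPow K (m + 1) t
        = ∫ s in Ioo (0:ℝ) t, K (t - s) * convPow K m s := by
          show (∫ s in Ioc (0 : ℝ) t, K (t - s) * convPow K m s) = _
          exact integral_Ioc_eq_integral_Ioo
      _ ≤ ∫ s in Ioo (0:ℝ) t, CC * (s ^ (c - 1) * (t - s) ^ (a - 1)) :=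
          integral_mono_of_nonneg hnn' hgint hdom'
      _ = CC * ∫ s in Ioo (0:ℝ) t, s ^ (c - 1) * (t - s) ^ (a - 1) := integral_const_mul _ _
      _ = CC * ∫ s in Ioc (0:ℝ) t, s ^ (c - 1) * (t - s) ^ (a - 1) := by
          rw [← integral_Ioc_eq_integral_Ioo]
      _ = CC * (Gamma c * Gamma a / Gamma (c + a) * t ^ (c + a - 1)) := by
          rw [myBetaEval hcpos ha ht]
      _ = C ^ (m + 1 + 1) * exp (b * t) * Gamma a ^ (m + 1 + 1) *
            t ^ (a * ((m + 1 : ℕ) + 1) - 1) / Gamma (a * ((m + 1 : ℕ) + 1)) := by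
          rw [hCC]
          have h1 : c + a = a * ((m + 1 : ℕ) + 1) := by rw [hc]; push_cast; ring
          rw [h1]
          field_simp
          ring

/-- If `0 ≤ K(t) ≤ C e^{bt} t^{a-1}`, then
`(𝟏 * K^{*n})(t) ≤ C^n e^{bt} Γ(a)^n t^{an} / Γ(an+1)` for every `n ≥ 1`. -/
theorem convPow_one_conv_bound
    (K : ℝ → ℝ) (a b C : ℝ) (ha : 0 < a) (hb : 0 < b) (hC : 0 < C)
    (hK0 : ∀ t, 0 ≤ t → 0 ≤ K t)
    (hKbound : ∀ t, 0 < t → K t ≤ C * exp (b * t) * t ^ (a - 1)) :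
    ∀ n : ℕ, 1 ≤ n → ∀ t : ℝ, 0 ≤ t →
      (∫ s in Ioc (0 : ℝ) t, convPow K (n - 1) s) ≤
        C ^ n * exp (b * t) * (Gamma a) ^ n * t ^ (a * n) / Gamma (a * n + 1) := by
  intro n hn t ht
  obtain ⟨m, rfl⟩ : ∃ m, n = m + 1 := ⟨n - 1, (Nat.succ_pred_eq_of_pos hn).symm⟩
  have hman : a * ((m + 1 : ℕ) : ℝ) = a * ((m : ℝ) + 1) := by push_cast; ring
  set c : ℝ := a * ((m : ℝ) + 1) with hc
  have hcpos : 0 < c := by positivity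
  have hΓc : (0:ℝ) < Gamma c := Real.Gamma_pos_of_pos hcpos
  have hΓa : (0:ℝ) < Gamma a := Real.Gamma_pos_of_pos ha
  rcases eq_or_lt_of_le ht with rfl | ht
  · simp only [Ioc_self, Measure.restrict_empty, integral_zero_measure]
    rw [hman, Real.zero_rpow hcpos.ne']
    simp
  · -- t > 0
    have hsimp : (m + 1 - 1 : ℕ) = m := rfl
    rw [hsimp]
    set D : ℝ := C ^ (m + 1) * exp (b * t) * Gamma a ^ (m + 1) / Gamma c with hD
    have hDpos : 0 ≤ D := by positivity
    have hgint : IntegrableOn (fun s : ℝ => D * s ^ (c - 1)) (Ioc 0 t) := by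
      have := intervalIntegral.intervalIntegrable_rpow' (a := 0) (b := t)
        (show (-1:ℝ) < c - 1 by linarith)
      rw [intervalIntegrable_iff, uIoc_of_le ht.le] at this
      exact this.const_mul D
    have hnn' : ∀ᵐ s ∂(volume.restrict (Ioc (0:ℝ) t)), 0 ≤ convPow K m s := by
      rw [ae_restrict_iff' measurableSet_Ioc]
      filter_upwards with s hs
      exact convPow_nonneg K hK0 m s hs.1.le
    have hdom : (fun s => convPow K m s) ≤ᵐ[volume.restrict (Ioc (0:ℝ) t)]
        fun s => D * s ^ (c - 1) := by
      refine (ae_restrict_iff' measurableSet_Ioc).mpr (Filter.Eventually.of_forall ?_)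
      intro s hs
      calc convPow K m s ≤ C ^ (m + 1) * exp (b * s) * Gamma a ^ (m + 1) *
            s ^ (c - 1) / Gamma c :=
          convPow_ptwise_bound K a b C ha hb hC hK0 hKbound m s hs.1
        _ ≤ D * s ^ (c - 1) := by
            rw [hD]
            have he : exp (b * s) ≤ exp (b * t) :=
              Real.exp_le_exp.mpr (by nlinarith [hs.2, hb.le])
            have hrpow : (0:ℝ) ≤ s ^ (c - 1) := rpow_nonneg hs.1.le _
            rw [div_mul_eq_mul_div, div_le_div_iff_of_pos_right hΓc]
            exact mul_le_mul_of_nonneg_right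
              (mul_le_mul_of_nonneg_right
                (mul_le_mul_of_nonneg_left he (by positivity)) (by positivity)) hrpow
    have hint_rpow : ∫ s in Ioc (0:ℝ) t, s ^ (c - 1) = t ^ c / c := by
      rw [← intervalIntegral.integral_of_le ht.le,
        integral_rpow (Or.inl (show (-1:ℝ) < c - 1 by linarith))]
      rw [Real.zero_rpow (by linarith : c - 1 + 1 ≠ 0)]
      rw [show c - 1 + 1 = c by ring]
      ring
    calc (∫ s in Ioc (0:ℝ) t, convPow K m s)
        ≤ ∫ s in Ioc (0:ℝ) t, D * s ^ (c - 1) :=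
          integral_mono_of_nonneg hnn' hgint hdom
      _ = D * (t ^ c / c) := by rw [integral_const_mul, hint_rpow]
      _ = C ^ (m + 1) * exp (b * t) * Gamma a ^ (m + 1) * t ^ (a * ((m + 1 : ℕ) : ℝ)) /
            Gamma (a * ((m + 1 : ℕ) : ℝ) + 1) := by
          rw [hD, hman, Real.Gamma_add_one hcpos.ne']
          field_simp
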